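/- Let p = [b_1^{a_1} ⋯ b_r^{a_r}] (b_1 ≥ ⋯ ≥ b_r) be an orthogonal partition of 2n+1 in which every b_i is odd. Then Σ_i a_i is odd, 2n* = (Σ_i a_i) − 1, and with P := [p_1 p_1 (2n*)] one has the exact identity P^t = p^-; in particular (P^t)_{Sp_{2n}} = (p^-)_{Sp_{2n}}. -/

import Mathlib

namespace JiangWF

/-- `sCount p i` : the number of parts of `p` that are `≥ i`. -/
def sCount (p : Multiset ℕ) (i : ℕ) : ℕ := (p.filter (fun a => i ≤ a)).card

/-- `rCount p i` : the number of parts of `p` equal to `i`. -/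
def rCount (p : Multiset ℕ) (i : ℕ) : ℕ := p.count i

/-- The largest part of `p` (`0` for the empty partition). -/
def maxPart (p : Multiset ℕ) : ℕ := p.sup

/-- The smallest part of `p` (`0` for the empty partition). -/
noncomputable def minPart (p : Multiset ℕ) : ℕ := sInf {a : ℕ | a ∈ p}

/-- The transpose partition: its `i`-th part is `sCount p i`, for `1 ≤ i ≤ maxPart p`. -/
def transpose (p : Multiset ℕ) : Multiset ℕ :=
  (Multiset.range (maxPart p)).map fun i => sCount p (i + 1)

/-- The sum of the `m` largest parts of `p`. -/
def topSum (p : Multiset ℕ) (m : ℕ) : ℕ :=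
  ∑ i ∈ Finset.Icc 1 p.sum, min m (sCount p i)

/-- Dominance order: `domLE p q` means `p ≤ q`. -/
def domLE (p q : Multiset ℕ) : Prop := ∀ m, topSum p m ≤ topSum q m

/-- `p` is a partition of `N`: all parts positive, summing to `N`. -/
def IsPartitionOf (p : Multiset ℕ) (N : ℕ) : Prop := (∀ a ∈ p, 0 < a) ∧ p.sum = N

/-- Symplectic partition: every odd part occurs with even multiplicity. -/
def IsSymplectic (p : Multiset ℕ) : Prop := ∀ a, a % 2 = 1 → Even (p.count a)

/-- Orthogonal partition: every even part occurs with even multiplicity. -/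
def IsOrthogonal (p : Multiset ℕ) : Prop := ∀ a, a % 2 = 0 → Even (p.count a)

/-- `p^-`: decrease the smallest part by one (deleting it if it becomes `0`). -/
noncomputable def pMinus (p : Multiset ℕ) : Multiset ℕ :=
  if minPart p ≤ 1 then p.erase (minPart p)
  else (minPart p - 1) ::ₘ p.erase (minPart p)

/-- `p^+`: increase the largest part by one. -/
def pPlus (p : Multiset ℕ) : Multiset ℕ := (maxPart p + 1) ::ₘ p.erase (maxPart p)

/-- `p^{+-}`: increase the largest part by one and decrease the smallest by one. -/
noncomputable def pPM (p : Multiset ℕ) : Multiset ℕ := pMinus (pPlus p)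

/-- `p₁ = [⌊b_1/2⌋^{a_1} ⋯ ⌊b_r/2⌋^{a_r}]^t` (discarding zero entries before transposing). -/
def pOne (p : Multiset ℕ) : Multiset ℕ :=
  transpose ((p.map fun b => b / 2).filter fun x => 0 < x)

/-- `Σ_{i : b_i odd} a_i`: the number of odd parts of `p`. -/
def oddMult (p : Multiset ℕ) : ℕ := (p.filter fun a => a % 2 = 1).card

/-- `n* = ⌊(Σ_{i : b_i odd} a_i)/2⌋`. -/
def nStar (p : Multiset ℕ) : ℕ := oddMult p / 2

/-- Append an extra part `m` to `q`, omitted if `m = 0`. -/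
def addPart (m : ℕ) (q : Multiset ℕ) : Multiset ℕ := if m = 0 then q else m ::ₘ q

/-- `c` is the `Sp`-collapse of `p`: the maximal symplectic partition `≤ p` in dominance. -/
def IsSpCollapse (p c : Multiset ℕ) : Prop :=
  IsPartitionOf c p.sum ∧ IsSymplectic c ∧ domLE c p ∧
    ∀ c', IsPartitionOf c' p.sum → IsSymplectic c' → domLE c' p → domLE c' c

/-- `c` is the `SO`-collapse of `p`: the maximal orthogonal partition `≤ p` in dominance. -/
def IsSOCollapse (p c : Multiset ℕ) : Prop :=
  IsPartitionOf c p.sum ∧ IsOrthogonal c ∧ domLE c p ∧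
    ∀ c', IsPartitionOf c' p.sum → IsOrthogonal c' → domLE c' p → domLE c' c

/-- `e` is the `Sp`-expansion of `p`: the minimal special symplectic partition `≥ p`. -/
def IsSpExpansion (p e : Multiset ℕ) : Prop :=
  IsPartitionOf e p.sum ∧ IsSymplectic e ∧ IsSymplectic (transpose e) ∧ domLE p e ∧
    ∀ e', IsPartitionOf e' p.sum → IsSymplectic e' → IsSymplectic (transpose e') →
      domLE p e' → domLE e e'

/-- `e` is the `SO_{2n+1}`-expansion of `p`: the minimal special orthogonal partition `≥ p`
(odd case: special means the transpose is orthogonal). -/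
def IsSOOddExpansion (p e : Multiset ℕ) : Prop :=
  IsPartitionOf e p.sum ∧ IsOrthogonal e ∧ IsOrthogonal (transpose e) ∧ domLE p e ∧
    ∀ e', IsPartitionOf e' p.sum → IsOrthogonal e' → IsOrthogonal (transpose e') →
      domLE p e' → domLE e e'

/-- `e` is the `SO_{2n}`-expansion of `p`: the minimal special orthogonal partition `≥ p`
(even case: special means the transpose is symplectic). -/
def IsSOEvenExpansion (p e : Multiset ℕ) : Prop :=
  IsPartitionOf e p.sum ∧ IsOrthogonal e ∧ IsSymplectic (transpose e) ∧ domLE p e ∧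
    ∀ e', IsPartitionOf e' p.sum → IsOrthogonal e' → IsSymplectic (transpose e') →
      domLE p e' → domLE e e'

/-- `dim_C(q)` for a symplectic partition `q` of `2k`:
`2k² + k − (1/2)Σ s_i(q)² − (1/2)Σ_{i odd} r_i(q)` (note `2k² + k = (|q|² + |q|)/2`). -/
def dimC (p : Multiset ℕ) : ℚ :=
  ((p.sum : ℚ) ^ 2 + (p.sum : ℚ)) / 2
    - (∑ i ∈ Finset.Icc 1 p.sum, (sCount p i : ℚ) ^ 2) / 2
    - (∑ i ∈ Finset.Icc 1 p.sum, if i % 2 = 1 then (rCount p i : ℚ) else 0) / 2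

/-- `dim_B(q)` for an orthogonal partition `q` of `2k+1`:
`2k² + k − (1/2)Σ s_i(q)² + (1/2)Σ_{i odd} r_i(q)` (note `2k² + k = (|q|² − |q|)/2`). -/
def dimB (p : Multiset ℕ) : ℚ :=
  ((p.sum : ℚ) ^ 2 - (p.sum : ℚ)) / 2
    - (∑ i ∈ Finset.Icc 1 p.sum, (sCount p i : ℚ) ^ 2) / 2
    + (∑ i ∈ Finset.Icc 1 p.sum, if i % 2 = 1 then (rCount p i : ℚ) else 0) / 2

/-- `dim_D(q)` for an orthogonal partition `q` of `2k`:
`2k² − k − (1/2)Σ s_i(q)² + (1/2)Σ_{i odd} r_i(q)` (note `2k² − k = (|q|² − |q|)/2`). -/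
def dimD (p : Multiset ℕ) : ℚ :=
  ((p.sum : ℚ) ^ 2 - (p.sum : ℚ)) / 2
    - (∑ i ∈ Finset.Icc 1 p.sum, (sCount p i : ℚ) ^ 2) / 2
    + (∑ i ∈ Finset.Icc 1 p.sum, if i % 2 = 1 then (rCount p i : ℚ) else 0) / 2


/-! ### Auxiliary lemmas -/

lemma sCount_le_card (p : Multiset ℕ) (k : ℕ) : sCount p k ≤ Multiset.card p :=
  Multiset.card_le_card (Multiset.filter_le _ p)

lemma sCount_anti (p : Multiset ℕ) {k k' : ℕ} (h : k ≤ k') : sCount p k' ≤ sCount p k :=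
  Multiset.card_le_card (Multiset.monotone_filter_right p fun _ ha => le_trans h ha)

lemma sCount_cons (a : ℕ) (s : Multiset ℕ) (k : ℕ) :
    sCount (a ::ₘ s) k = (if k ≤ a then 1 else 0) + sCount s k := by
  rw [sCount, Multiset.filter_cons]
  split_ifs with h <;> simp [sCount] <;> omega

lemma sCount_add (s t : Multiset ℕ) (k : ℕ) :
    sCount (s + t) k = sCount s k + sCount t k := by
  rw [sCount, Multiset.filter_add, Multiset.card_add]; rfl

lemma exists_le_of_le_sup {s : Multiset ℕ} {k : ℕ} (hk : 1 ≤ k) (h : k ≤ s.sup) :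
    ∃ a ∈ s, k ≤ a := by
  induction s using Multiset.induction with
  | empty => simp at h; omega
  | cons a s ih =>
    rw [Multiset.sup_cons] at h
    rcases le_or_gt k a with h' | h'
    · exact ⟨a, Multiset.mem_cons_self a s, h'⟩
    · have h2 : k ≤ s.sup := by
        rcases le_total a s.sup with hh | hh
        · rwa [sup_eq_right.2 hh] at h
        · rw [sup_eq_left.2 hh] at h; omega
      obtain ⟨b, hb, hkb⟩ := ih h2
      exact ⟨b, Multiset.mem_cons_of_mem hb, hkb⟩

lemma sCount_pos_of_le_maxPart {s : Multiset ℕ} {k : ℕ} (hk : 1 ≤ k) (h : k ≤ maxPart s) :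
    0 < sCount s k := by
  obtain ⟨a, ha, hka⟩ := exists_le_of_le_sup hk h
  rw [sCount]
  exact Multiset.card_pos_iff_exists_mem.2 ⟨a, Multiset.mem_filter.2 ⟨ha, hka⟩⟩

lemma le_maxPart_of_sCount_pos {s : Multiset ℕ} {k : ℕ} (h : 0 < sCount s k) :
    k ≤ maxPart s := by
  rw [sCount] at h
  obtain ⟨a, ha⟩ := Multiset.card_pos_iff_exists_mem.1 h
  obtain ⟨hmem, hka⟩ := Multiset.mem_filter.1 ha
  exact le_trans hka (Multiset.le_sup hmem)

lemma maxPart_le_sum (s : Multiset ℕ) : maxPart s ≤ s.sum :=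
  Multiset.sup_le.2 fun b hb => Multiset.single_le_sum (fun _ _ => Nat.zero_le _) b hb

lemma sCount_eq_count_add (p : Multiset ℕ) (k : ℕ) :
    sCount p k = p.count k + sCount p (k + 1) := by
  induction p using Multiset.induction with
  | empty => simp [sCount]
  | cons a s ih =>
    rw [sCount_cons, sCount_cons, Multiset.count_cons, ih]
    split_ifs <;> omega

lemma ext_of_sCount (p q : Multiset ℕ) (hp : ∀ a ∈ p, 0 < a) (hq : ∀ a ∈ q, 0 < a)
    (h : ∀ k, 1 ≤ k → sCount p k = sCount q k) : p = q := by
  ext a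
  rcases Nat.eq_zero_or_pos a with rfl | ha
  · rw [Multiset.count_eq_zero.2 (fun hm => absurd (hp 0 hm) (lt_irrefl 0)),
      Multiset.count_eq_zero.2 (fun hm => absurd (hq 0 hm) (lt_irrefl 0))]
  · have h1 := sCount_eq_count_add p a
    have h2 := sCount_eq_count_add q a
    have h3 := h a ha
    have h4 := h (a + 1) (by omega)
    omega

/-- `DD r j` : the number of parts of `transpose r` that are `≥ j`. -/
def DD (r : Multiset ℕ) (j : ℕ) : ℕ :=
  ((Finset.range (maxPart r)).filter fun i => j ≤ sCount r (i + 1)).card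

lemma sCount_transpose (r : Multiset ℕ) (k : ℕ) : sCount (transpose r) k = DD r k := by
  rw [sCount, transpose, ← Multiset.countP_eq_card_filter, Multiset.countP_map, DD]
  rfl

lemma dual (r : Multiset ℕ) {j x : ℕ} (hj : 1 ≤ j) (hx : 1 ≤ x) :
    j ≤ sCount r x ↔ x ≤ DD r j := by
  constructor
  · intro h
    have hxM : x ≤ maxPart r := le_maxPart_of_sCount_pos (lt_of_lt_of_le hj h)
    have hsub : Finset.range x ⊆
        (Finset.range (maxPart r)).filter fun i => j ≤ sCount r (i + 1) := by
      intro i hi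
      simp only [Finset.mem_range] at hi
      simp only [Finset.mem_filter, Finset.mem_range]
      exact ⟨lt_of_lt_of_le hi hxM, le_trans h (sCount_anti r (by omega))⟩
    calc x = (Finset.range x).card := (Finset.card_range x).symm
      _ ≤ DD r j := Finset.card_le_card hsub
  · intro h
    by_contra hcon
    push_neg at hcon
    have hsub : ((Finset.range (maxPart r)).filter fun i => j ≤ sCount r (i + 1)) ⊆
        Finset.range (x - 1) := by
      intro i hi
      simp only [Finset.mem_filter, Finset.mem_range] at hi ⊢
      by_contra hge
      push_neg at hge
      have : sCount r (i + 1) ≤ sCount r x := sCount_anti r (by omega)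
      omega
    have hcard := Finset.card_le_card hsub
    rw [Finset.card_range] at hcard
    rw [DD] at h
    omega

/-- `EE c m` : the number of `i ∈ [1, |c|]` with `sCount c i ≥ m`. -/
def EE (c : Multiset ℕ) (m : ℕ) : ℕ :=
  ((Finset.Icc 1 c.sum).filter fun i => m ≤ sCount c i).card

lemma topSum_succ (c : Multiset ℕ) (m : ℕ) :
    topSum c (m + 1) = topSum c m + EE c (m + 1) := by
  rw [topSum, topSum, EE, Finset.card_filter, ← Finset.sum_add_distrib]
  apply Finset.sum_congr rfl
  intro i _
  by_cases h : m + 1 ≤ sCount c i <;> simp [h] <;> omega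

lemma dualE (c : Multiset ℕ) {m x : ℕ} (hm : 1 ≤ m) (hx : 1 ≤ x) :
    m ≤ sCount c x ↔ x ≤ EE c m := by
  constructor
  · intro h
    have hxM : x ≤ c.sum :=
      le_trans (le_maxPart_of_sCount_pos (lt_of_lt_of_le hm h)) (maxPart_le_sum c)
    have hsub : Finset.Icc 1 x ⊆ (Finset.Icc 1 c.sum).filter fun i => m ≤ sCount c i := by
      intro i hi
      simp only [Finset.mem_Icc] at hi
      simp only [Finset.mem_filter, Finset.mem_Icc]
      exact ⟨⟨hi.1, le_trans hi.2 hxM⟩, le_trans h (sCount_anti c hi.2)⟩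
    calc x = (Finset.Icc 1 x).card := by rw [Nat.card_Icc]; omega
      _ ≤ EE c m := Finset.card_le_card hsub
  · intro h
    by_contra hcon
    push_neg at hcon
    have hsub : ((Finset.Icc 1 c.sum).filter fun i => m ≤ sCount c i) ⊆
        Finset.Icc 1 (x - 1) := by
      intro i hi
      simp only [Finset.mem_filter, Finset.mem_Icc] at hi ⊢
      refine ⟨hi.1.1, ?_⟩
      by_contra hge
      push_neg at hge
      have : sCount c i ≤ sCount c x := sCount_anti c (by omega)
      omega
    have hcard := Finset.card_le_card hsub
    rw [Nat.card_Icc] at hcard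
    rw [EE] at h
    omega

lemma eq_of_domLE_both {c₁ c₂ : Multiset ℕ} (h1 : ∀ a ∈ c₁, 0 < a) (h2 : ∀ a ∈ c₂, 0 < a)
    (hsum : c₁.sum = c₂.sum) (hd : domLE c₁ c₂) (hd' : domLE c₂ c₁) : c₁ = c₂ := by
  have htop : ∀ m, topSum c₁ m = topSum c₂ m := fun m => le_antisymm (hd m) (hd' m)
  have hE : ∀ m, EE c₁ (m + 1) = EE c₂ (m + 1) := by
    intro m
    have e1 := topSum_succ c₁ m
    have e2 := topSum_succ c₂ m
    have e3 := htop m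
    have e4 := htop (m + 1)
    omega
  have hS : ∀ x, 1 ≤ x → sCount c₁ x = sCount c₂ x := by
    intro x hx
    have hle : ∀ (a b : Multiset ℕ), (∀ m, EE a (m + 1) = EE b (m + 1)) →
        sCount a x ≤ sCount b x := by
      intro a b hab
      rcases Nat.eq_zero_or_pos (sCount a x) with h0 | h0
      · omega
      · have hm : 1 ≤ sCount a x := h0
        have := (dualE a hm hx).1 le_rfl
        obtain ⟨m, hm2⟩ : ∃ m, sCount a x = m + 1 := ⟨sCount a x - 1, by omega⟩
        rw [hm2, hab m] at this
        have := (dualE b (m := m + 1) (by omega) hx).2 this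
        omega
    exact le_antisymm (hle c₁ c₂ hE) (hle c₂ c₁ fun m => (hE m).symm)
  exact ext_of_sCount c₁ c₂ h1 h2 hS

lemma spCollapse_unique {r c₁ c₂ : Multiset ℕ} (h1 : IsSpCollapse r c₁)
    (h2 : IsSpCollapse r c₂) : c₁ = c₂ := by
  obtain ⟨⟨hp1, hs1⟩, hsy1, hd1, hmax1⟩ := h1
  obtain ⟨⟨hp2, hs2⟩, hsy2, hd2, hmax2⟩ := h2
  have d12 := hmax2 c₁ ⟨hp1, hs1⟩ hsy1 hd1
  have d21 := hmax1 c₂ ⟨hp2, hs2⟩ hsy2 hd2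
  exact eq_of_domLE_both hp1 hp2 (by rw [hs1, hs2]) d12 d21

lemma sum_mod_two_eq_card {s : Multiset ℕ} (h : ∀ a ∈ s, a % 2 = 1) :
    s.sum % 2 = Multiset.card s % 2 := by
  induction s using Multiset.induction with
  | empty => simp
  | cons a s ih =>
    have ha := h a (Multiset.mem_cons_self a s)
    have hs := ih fun b hb => h b (Multiset.mem_cons_of_mem hb)
    rw [Multiset.sum_cons, Multiset.card_cons]
    omega

/-- `p` an orthogonal partition of `2n+1` all of whose parts are odd.
Then `Σ_i a_i` (the number of parts) is odd, `2n* = (Σ_i a_i) − 1`, and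
`P = [p₁ p₁ (2n*)]` satisfies `P^t = p^-`; in particular
`(P^t)_{Sp_{2n}} = (p^-)_{Sp_{2n}}`. -/
theorem transpose_eq_pMinus_of_odd_parts (n : ℕ) (p : Multiset ℕ)
    (hp : IsPartitionOf p (2 * n + 1)) (horth : IsOrthogonal p)
    (hodd : ∀ a ∈ p, a % 2 = 1) :
    Odd (Multiset.card p) ∧ 2 * nStar p = Multiset.card p - 1 ∧
      transpose (addPart (2 * nStar p) (pOne p + pOne p)) = pMinus p ∧
      ∀ c₁ c₂ : Multiset ℕ,
        IsSpCollapse (transpose (addPart (2 * nStar p) (pOne p + pOne p))) c₁ →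
        IsSpCollapse (pMinus p) c₂ → c₁ = c₂ := by
  obtain ⟨hpos, hsum⟩ := hp
  have hcard_odd : Multiset.card p % 2 = 1 := by
    have h := sum_mod_two_eq_card hodd
    omega
  have hpne : p ≠ 0 := by
    intro h
    rw [h, Multiset.sum_zero] at hsum
    omega
  have hc1 : 1 ≤ Multiset.card p := Multiset.card_pos.2 hpne
  have hoddMult : oddMult p = Multiset.card p := by
    rw [oddMult, Multiset.filter_eq_self.2 hodd]
  have hnstar : 2 * nStar p = Multiset.card p - 1 := by
    rw [nStar, hoddMult]; omega
  set c := Multiset.card p with hcdef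
  set m := 2 * nStar p with hmdef
  set μ := minPart p with hμdef
  have hμmem : μ ∈ p := Nat.sInf_mem (Multiset.exists_mem_of_ne_zero hpne)
  have hμodd : μ % 2 = 1 := hodd μ hμmem
  have hμpos : 0 < μ := hpos μ hμmem
  have hμ_min : ∀ a ∈ p, μ ≤ a := fun a ha => Nat.sInf_le ha
  set q := (p.map fun b => b / 2).filter (fun x => 0 < x) with hqdef
  have hpone : pOne p = transpose q := by rw [hqdef]; rfl
  have hq : ∀ x, 1 ≤ x → sCount q x = sCount p (2 * x + 1) := by
    intro x hx
    simp only [sCount]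
    rw [hqdef, Multiset.filter_filter, ← Multiset.countP_eq_card_filter,
      Multiset.countP_map]
    congr 1
    apply Multiset.filter_congr
    intro b hb
    have hb2 := hodd b hb
    omega
  have hSfull : ∀ x, x ≤ μ → sCount p x = c := by
    intro x hx
    rw [sCount, Multiset.filter_eq_self.2 fun a ha => le_trans hx (hμ_min a ha)]
  have hco : μ ::ₘ p.erase μ = p := Multiset.cons_erase hμmem
  have hcerase : Multiset.card (p.erase μ) = c - 1 := by
    rw [Multiset.card_erase_of_mem hμmem, Nat.pred_eq_sub_one]
  have hSless : ∀ x, μ < x → sCount p x ≤ c - 1 := by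
    intro x hx
    have h1 : sCount p x = sCount (μ ::ₘ p.erase μ) x := by rw [hco]
    rw [h1, sCount_cons, if_neg (by omega)]
    have := sCount_le_card (p.erase μ) x
    omega
  have hstep : ∀ x, sCount p (2 * x) = sCount p (2 * x + 1) := by
    intro x
    simp only [sCount]
    congr 1
    apply Multiset.filter_congr
    intro b hb
    have := hodd b hb
    omega
  have hSP : ∀ j, 1 ≤ j → sCount (addPart m (pOne p + pOne p)) j
      = 2 * DD q j + (if j ≤ m then 1 else 0) := by
    intro j hj
    rw [hpone, addPart]
    by_cases hm0 : m = 0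
    · rw [if_pos hm0, sCount_add, sCount_transpose, if_neg (by omega)]
      omega
    · rw [if_neg hm0, sCount_cons, sCount_add, sCount_transpose]
      split_ifs <;> omega
  have hPM : ∀ k, 1 ≤ k → sCount (pMinus p) k + (if k = μ then 1 else 0) = sCount p k := by
    intro k hk
    have h1 : sCount p k = (if k ≤ μ then 1 else 0) + sCount (p.erase μ) k := by
      conv_lhs => rw [← hco]
      rw [sCount_cons]
    rw [pMinus, ← hμdef]
    by_cases hμ1 : μ ≤ 1
    · rw [if_pos hμ1, h1]
      split_ifs <;> omega
    · rw [if_neg hμ1, sCount_cons, h1]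
      split_ifs <;> omega
  have hdual : ∀ j x, 1 ≤ j → 1 ≤ x → (j ≤ sCount p (2 * x + 1) ↔ x ≤ DD q j) := by
    intro j x hj hx
    rw [← hq x hx]
    exact dual q hj hx
  set P := addPart m (pOne p + pOne p) with hPdef
  have hkey : ∀ j k, 1 ≤ j → 1 ≤ k →
      (k ≤ sCount P j ↔ j ≤ sCount (pMinus p) k) := by
    intro j k hj hk
    rw [hSP j hj]
    have hMk := hPM k hk
    have hSkle : sCount p k ≤ c := sCount_le_card p k
    constructor
    · intro h
      by_cases hk2d : k ≤ 2 * DD q j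
      · have hd1 : 1 ≤ DD q j := by omega
        have hj1 : j ≤ sCount p (2 * DD q j + 1) := (hdual j (DD q j) hj hd1).2 le_rfl
        have h2 : sCount p (2 * DD q j + 1) ≤ sCount p k := sCount_anti p (by omega)
        by_cases hkμ : k = μ
        · have h3 : sCount p (2 * DD q j + 1) ≤ c - 1 := hSless _ (by omega)
          have h4 : sCount p k = c := hSfull k (by omega)
          rw [if_pos hkμ] at hMk
          omega
        · rw [if_neg hkμ] at hMk
          omega
      · have hjm : j ≤ m := by
          by_contra hh
          rw [if_neg hh] at h
          omega
        rw [if_pos hjm] at h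
        have hk2 : k = 2 * DD q j + 1 := by omega
        have hjc : j ≤ c - 1 := by omega
        by_cases hμk : k ≤ μ
        · have h4 : sCount p k = c := hSfull k hμk
          split_ifs at hMk <;> omega
        · have hd1 : 1 ≤ DD q j := by omega
          have hj1 : j ≤ sCount p (2 * DD q j + 1) := (hdual j (DD q j) hj hd1).2 le_rfl
          rw [if_neg (show ¬ k = μ by omega)] at hMk
          have heqk : sCount p k = sCount p (2 * DD q j + 1) := by rw [hk2]
          omega
    · intro h
      have hjSk : j ≤ sCount p k := by split_ifs at hMk <;> omega
      rcases Nat.even_or_odd k with hke | hko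
      · obtain ⟨x, hx⟩ := hke
        have hx1 : 1 ≤ x := by omega
        have h5 : sCount p (2 * x) = sCount p (2 * x + 1) := hstep x
        have h6 : j ≤ sCount p (2 * x + 1) := by
          have heq : sCount p k = sCount p (2 * x) := by rw [show k = 2 * x by omega]
          omega
        have h7 : x ≤ DD q j := (hdual j x hj hx1).1 h6
        split_ifs <;> omega
      · obtain ⟨x, hx⟩ := hko
        have hxd : x ≤ DD q j := by
          rcases Nat.eq_zero_or_pos x with rfl | hx1
          · omega
          · have h6 : j ≤ sCount p (2 * x + 1) := by
              have heq : sCount p (2 * x + 1) = sCount p k := by rw [hx]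
              omega
            exact (hdual j x hj hx1).1 h6
        by_cases hjm : j ≤ m
        · rw [if_pos hjm]; omega
        · have hjc : c ≤ j := by omega
          have hkμ : ¬ k = μ := by
            intro hkk
            rw [if_pos hkk] at hMk
            omega
          rw [if_neg hkμ] at hMk
          have hfull : sCount p k = c := by omega
          have hμk : k ≤ μ := by
            by_contra hh
            push_neg at hh
            have := hSless k hh
            omega
          have hμ3 : 2 * (x + 1) + 1 ≤ μ := by omega
          have h8 : sCount p (2 * (x + 1) + 1) = c := hSfull _ hμ3
          have h9 : x + 1 ≤ DD q j := (hdual j (x + 1) hj (by omega)).1 (by omega)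
          rw [if_neg hjm]
          omega
  have hposT : ∀ a ∈ transpose P, 0 < a := by
    intro a ha
    rw [transpose] at ha
    obtain ⟨i, hi, rfl⟩ := Multiset.mem_map.1 ha
    have hiM : i < maxPart P := Multiset.mem_range.1 hi
    exact sCount_pos_of_le_maxPart (by omega) (by omega)
  have hposM : ∀ a ∈ pMinus p, 0 < a := by
    intro a ha
    rw [pMinus, ← hμdef] at ha
    split_ifs at ha with hh
    · exact hpos a (Multiset.mem_of_mem_erase ha)
    · rcases Multiset.mem_cons.1 ha with rfl | h'
      · omega
      · exact hpos a (Multiset.mem_of_mem_erase h')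
  have hSeq : ∀ k, 1 ≤ k → sCount (transpose P) k = sCount (pMinus p) k := by
    intro k hk
    rw [sCount_transpose]
    set s := sCount (pMinus p) k with hsdef
    have hset : ((Finset.range (maxPart P)).filter fun i => k ≤ sCount P (i + 1))
        = Finset.range s := by
      ext i
      simp only [Finset.mem_filter, Finset.mem_range]
      constructor
      · rintro ⟨hiM, hky⟩
        have := (hkey (i + 1) k (by omega) hk).1 hky
        omega
      · intro his
        have hs1 : 1 ≤ s := by omega
        have h1 : k ≤ sCount P (i + 1) := (hkey (i + 1) k (by omega) hk).2 (by omega)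
        have h2 : k ≤ sCount P s := (hkey s k hs1 hk).2 le_rfl
        have h3 : s ≤ maxPart P := le_maxPart_of_sCount_pos (by omega)
        exact ⟨by omega, h1⟩
    rw [DD, hset, Finset.card_range]
  have hmain : transpose P = pMinus p := ext_of_sCount _ _ hposT hposM hSeq
  refine ⟨Nat.odd_iff.2 hcard_odd, hnstar, hmain, ?_⟩
  intro c₁ c₂ h1 h2
  rw [hmain] at h1
  exact spCollapse_unique h1 h2

end JiangWF
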